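/- (Monotonicity of L with respect to the initial position.) For any 0 ≤ i ≤ j, the branching Markov chain L under P_i is stochastically dominated by L under P_j: the two processes can be constructed on the same probability space so that ℓ(x) ≤ ℓ̃(x) for every vertex x of T almost surely, where ℓ and ℓ̃ denote the position functions of the copies started from i and j respectively. -/

import Mathlib

open MeasureTheory ProbabilityTheory Filter Topology
open scoped ENNReal NNReal

namespace CookieRW

/-- A cookie environment `𝒞 = (p 1, …, p M ; q)`.  Only the values `p 1, …, p M`
of the strength function are relevant. -/
structure Env where
  M : ℕ
  hM : 1 ≤ M
  p : ℕ → ℝ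
  hp : ∀ i, 1 ≤ i → i ≤ M → 0 ≤ p i ∧ p i < 1
  q : ℝ
  hq0 : 0 < q
  hq1 : q < 1

namespace Env

/-- strength of the excitation received on the `j`-th visit to a site
(`q` after the `M` cookies have been eaten). -/
def str (C : Env) (j : ℕ) : ℝ := if j ≤ C.M then C.p j else C.q

/-- canonical componentwise partial order on cookie environments -/
def le (C C' : Env) : Prop :=
  C.M = C'.M ∧ (∀ i, 1 ≤ i → i ≤ C.M → C.p i ≤ C'.p i) ∧ C.q ≤ C'.q

end Env

/-- vertices of the rooted `b`-ary tree: the root is `[]` and the children of `x`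
are the lists `i :: x`, `i : Fin b`. -/
abbrev Vertex (b : ℕ) := List (Fin b)

def root (b : ℕ) : Vertex b := []

/-- the father of a vertex (the father of the root is the root itself). -/
def father {b : ℕ} (x : Vertex b) : Vertex b := x.tail

def child {b : ℕ} (x : Vertex b) (i : Fin b) : Vertex b := i :: x

/-- number of visits of the trajectory `h` to its position at time `n`,
up to and including time `n`. -/
def visits {b : ℕ} (h : ℕ → Vertex b) (n : ℕ) : ℕ :=
  ((Finset.range (n + 1)).filter fun k => h k = h n).card

/-- `X` is a `C` cookie (multi-excited) random walk on the rooted `b`-ary tree,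
under the probability measure `P`. -/
def IsCRW {Ω : Type*} [MeasurableSpace Ω] (b : ℕ) (C : Env)
    (P : Measure Ω) (X : ℕ → Ω → Vertex b) : Prop :=
  (∀ n x, MeasurableSet {ω | X n ω = x}) ∧
  P {ω | X 0 ω = root b} = 1 ∧
  ∀ (n : ℕ) (h : ℕ → Vertex b),
    P {ω | ∀ k ≤ n, X k ω = h k} ≠ 0 →
      (∀ i : Fin b,
        (P[|{ω | ∀ k ≤ n, X k ω = h k}]) {ω | X (n + 1) ω = child (h n) i}
          = ENNReal.ofReal (C.str (visits h n) / b)) ∧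
      (P[|{ω | ∀ k ≤ n, X k ω = h k}]) {ω | X (n + 1) ω = father (h n)}
          = ENNReal.ofReal (1 - C.str (visits h n))

/-- the walk visits every vertex infinitely often, almost surely. -/
def Recurrent {Ω : Type*} [MeasurableSpace Ω] {b : ℕ}
    (P : Measure Ω) (X : ℕ → Ω → Vertex b) : Prop :=
  ∀ x : Vertex b, P {ω | {n : ℕ | X n ω = x}.Infinite} = 1

/-- `|X_n| → ∞` almost surely. -/
def Transient {Ω : Type*} [MeasurableSpace Ω] {b : ℕ}
    (P : Measure Ω) (X : ℕ → Ω → Vertex b) : Prop :=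
  P {ω | Tendsto (fun n => (X n ω).length) atTop atTop} = 1

/-- successive return times of the walk to the root (`sInf ∅ = ⊤ = ∞`). -/
noncomputable def tau {Ω : Type*} {b : ℕ} (X : ℕ → Ω → Vertex b) : ℕ → Ω → ℕ∞
  | 0 => fun _ => 0
  | k + 1 => fun ω =>
      sInf {t : ℕ∞ | ∃ m : ℕ, t = (m : ℕ∞) ∧ tau X k ω < (m : ℕ∞) ∧ X m ω = root b}

/-- distribution of `ξ_i` : `xiProb b C i v = P(ξ_i = v)` for `v ∈ {0, …, b}`. -/
noncomputable def xiProb (b : ℕ) (C : Env) (i v : ℕ) : ℝ :=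
  if v = 0 then 1 - C.str i else if v ≤ b then C.str i / b else 0

/-- probability of a given realization `e` of `(ξ_1, …, ξ_N)`. -/
noncomputable def seqWeight (b : ℕ) (C : Env) {N : ℕ} (e : Fin N → Fin (b + 1)) : ℝ :=
  ∏ k, xiProb b C (k.1 + 1) (e k).1

/-- the cookie environment matrix `p(i,j)` : the probability that exactly `j` of the
`ξ`'s take the value `1` before the `i`-th failure in the sequence `(ξ_1, ξ_2, …)`,
obtained by decomposing over the time `N` of the `i`-th failure. -/
noncomputable def pMat (b : ℕ) (C : Env) (i j : ℕ) : ℝ :=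
  if i = 0 then (if j = 0 then 1 else 0)
  else
    ∑' N : ℕ,
      ∑ e ∈ Finset.univ.filter (fun e : Fin N → Fin (b + 1) =>
          (Finset.univ.filter fun k => (e k).1 = 0).card = i ∧
          (Finset.univ.filter fun k => (e k).1 = 1).card = j ∧
          ∀ k : Fin N, k.1 + 1 = N → (e k).1 = 0),
        seqWeight b C e

/-- entries `p^{(n)}(i,j)` of the `n`-th power of the matrix `P`. -/
noncomputable def pPow (b : ℕ) (C : Env) : ℕ → ℕ → ℕ → ℝ
  | 0 => fun i j => if i = j then 1 else 0
  | n + 1 => fun i j => ∑' k : ℕ, pPow b C n i k * pMat b C k j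

/-- accessibility `i → j` for the matrix `P`. -/
def acc (b : ℕ) (C : Env) (i j : ℕ) : Prop := ∃ n, 1 ≤ n ∧ 0 < pPow b C n i j

/-- mutual accessibility `i ↔ j`. -/
def macc (b : ℕ) (C : Env) (i j : ℕ) : Prop := acc b C i j ∧ acc b C j i

/-- the spectral radius `lim_n (p^{(n)}(i,i))^{1/n}` of the irreducible class of `i`
(a path from `i` to `i` stays inside the class of `i`). -/
noncomputable def classRadius (b : ℕ) (C : Env) (i : ℕ) : ℝ :=
  limsup (fun n : ℕ => (pPow b C n i i) ^ ((n : ℝ)⁻¹)) atTop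

/-- `λ(𝒞)` : the largest spectral radius of the irreducible classes of `P`
other than `{0}`. -/
noncomputable def lambdaC (b : ℕ) (C : Env) : ℝ :=
  sSup {x : ℝ | ∃ i, 1 ≤ i ∧ macc b C i i ∧ x = classRadius b C i}

/-- the quantity `λ_sym(𝒞)` of Theorem 1.5. -/
noncomputable def lambdaSym (b : ℕ) (C : Env) : ℝ :=
  (C.q / (b * (1 - C.q))) *
    ∏ i ∈ Finset.Icc 1 C.M,
      ((1 - C.p i) * (C.q / (b * (1 - C.q))) + (b - 1) * C.p i / b
        + (C.p i / b) * (C.q / (b * (1 - C.q)))⁻¹)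

/-- the left endpoint `l_K` of the unique infinite irreducible class of `P`
(the class of `M + 1`). -/
noncomputable def lK (b : ℕ) (C : Env) : ℕ := sInf {i | macc b C i (C.M + 1)}

/-- joint law of the positions of the `b` children of a particle located at `j0`:
`childLaw b C j0 j` is the probability that, among `ξ_1, …, ξ_{j0 + j 1 + … + j b}`,
exactly `j0` of them equal `0`, exactly `j k` of them equal `k` for `k ∈ {1, …, b}`,
and the last one equals `0`. -/
noncomputable def childLaw (b : ℕ) (C : Env) (j0 : ℕ) (j : Fin b → ℕ) : ℝ :=
  if j0 = 0 then (if ∀ i, j i = 0 then 1 else 0)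
  else
    ∑ e ∈ Finset.univ.filter (fun e : Fin (j0 + ∑ i, j i) → Fin (b + 1) =>
        (Finset.univ.filter fun k => (e k).1 = 0).card = j0 ∧
        (∀ i : Fin b, (Finset.univ.filter fun k => (e k).1 = i.1 + 1).card = j i) ∧
        ∀ k, k.1 + 1 = j0 + ∑ i, j i → (e k).1 = 0),
      seqWeight b C e

/-- `ℓ` is (a realization of) the branching Markov chain `L` associated with the
cookie environment `C`, started from one particle located at `k` (the measure `P_k`):
particles are indexed by the vertices of the tree, and, conditionally on the
positions of the particles up to generation `n`, the children vectors of the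
particles of generation `n` are independent with joint law `childLaw`. -/
def IsBMC {Ω : Type*} [MeasurableSpace Ω] (b : ℕ) (C : Env) (P : Measure Ω)
    (ℓ : Vertex b → Ω → ℕ) (k : ℕ) : Prop :=
  (∀ x m, MeasurableSet {ω | ℓ x ω = m}) ∧
  P {ω | ℓ (root b) ω = k} = 1 ∧
  ∀ (n : ℕ) (g f : Vertex b → ℕ),
    P {ω | ∀ y : Vertex b, y.length ≤ n → ℓ y ω = g y} ≠ 0 →
      (P[|{ω | ∀ y : Vertex b, y.length ≤ n → ℓ y ω = g y}])
          {ω | ∀ x : Vertex b, x.length = n + 1 → ℓ x ω = f x}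
        = ENNReal.ofReal
            (∏ v : Fin n → Fin b,
              childLaw b C (g (List.ofFn v)) fun i => f (i :: List.ofFn v))

/-- the branching Markov chain dies out : at some generation all particles are at `0`. -/
def DiesOut {Ω : Type*} {b : ℕ} (ℓ : Vertex b → Ω → ℕ) (ω : Ω) : Prop :=
  ∃ n : ℕ, ∀ x : Vertex b, x.length = n → ℓ x ω = 0

/-- `Z` is a Markov chain on `ℕ` with transition matrix the cookie environment
matrix `P`, started from `i0`. -/
def IsChainP {Ω : Type*} [MeasurableSpace Ω] (b : ℕ) (C : Env) (P : Measure Ω)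
    (Z : ℕ → Ω → ℕ) (i0 : ℕ) : Prop :=
  (∀ n m, MeasurableSet {ω | Z n ω = m}) ∧
  P {ω | Z 0 ω = i0} = 1 ∧
  ∀ (n : ℕ) (h : ℕ → ℕ),
    P {ω | ∀ k ≤ n, Z k ω = h k} ≠ 0 →
      ∀ j, (P[|{ω | ∀ k ≤ n, Z k ω = h k}]) {ω | Z (n + 1) ω = j}
        = ENNReal.ofReal (pMat b C (h n) j)

/-- the largest positive eigenvalue `ν(p₁,p₂)` of the matrix of Proposition 1.7. -/
noncomputable def nu (b : ℕ) (p1 p2 : ℝ) : ℝ :=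
  (1 / (2 * (b : ℝ) ^ 2)) *
    (((b : ℝ) - 1) * p1 * p2 + b * p1 +
      Real.sqrt (((b : ℝ) ^ 2 - 6 * b + 1) * p1 ^ 2 * p2 ^ 2
        + 2 * b * ((b : ℝ) - 1) * p1 ^ 2 * p2 + (b : ℝ) ^ 2 * p1 ^ 2
        + 4 * b * p1 * p2 ^ 2))

/-- `s = q / (q + (1-q) b)`. -/
noncomputable def sC (b : ℕ) (C : Env) : ℝ := C.q / (C.q + (1 - C.q) * b)

/-- probability of the event `E_{m,n}` : among `(ξ_1, …, ξ_M)` there are at least `m`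
terms equal to `0` and exactly `n` terms equal to `1` before the `m`-th `0`. -/
noncomputable def probE (b : ℕ) (C : Env) (m n : ℕ) : ℝ :=
  ∑ e ∈ Finset.univ.filter (fun e : Fin C.M → Fin (b + 1) =>
      ∃ t : Fin C.M, (e t).1 = 0 ∧
        (Finset.univ.filter fun k => k ≤ t ∧ (e k).1 = 0).card = m ∧
        (Finset.univ.filter fun k => k < t ∧ (e k).1 = 1).card = n),
    seqWeight b C e

/-- probability of the event `E'_{m,n}` : among `(ξ_1, …, ξ_M)` there are exactly `m`
terms equal to `0` and exactly `n` terms equal to `1`. -/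
noncomputable def probE' (b : ℕ) (C : Env) (m n : ℕ) : ℝ :=
  ∑ e ∈ Finset.univ.filter (fun e : Fin C.M → Fin (b + 1) =>
      (Finset.univ.filter fun k => (e k).1 = 0).card = m ∧
      (Finset.univ.filter fun k => (e k).1 = 1).card = n),
    seqWeight b C e

/-- the correction term `A(j)` of Lemma 7.3. -/
noncomputable def Afun (b : ℕ) (C : Env) (j : ℕ) : ℝ :=
  (∑ i ∈ Finset.Icc 1 (C.M - j), probE b C i j * (sC b C / (1 - sC b C)) ^ (i - 1))
    - ∑ n ∈ Finset.Icc (j + 1) C.M, ∑ m ∈ Finset.range (C.M - n + 1),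
        probE' b C m n * (sC b C / (1 - sC b C)) ^ ((j : ℤ) + m - n)

/-- entries of the `n`-th power of the sub-matrix `(p(i,j))_{i,j ≥ l}`. -/
noncomputable def pPowFrom (b : ℕ) (C : Env) (l : ℕ) : ℕ → ℕ → ℕ → ℝ
  | 0 => fun i j => if i = j then 1 else 0
  | n + 1 => fun i j => ∑' k : ℕ, pPowFrom b C l n i (l + k) * pMat b C (l + k) j

/-- entries of the `n`-th power of a general matrix indexed by `ℕ`. -/
noncomputable def matPow (q : ℕ → ℕ → ℝ) : ℕ → ℕ → ℕ → ℝ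
  | 0 => fun i j => if i = j then 1 else 0
  | n + 1 => fun i j => ∑' k : ℕ, matPow q n i k * q k j

/-- irreducibility of a non-negative matrix indexed by `ℕ`. -/
def MatIrred (q : ℕ → ℕ → ℝ) : Prop := ∀ i j, ∃ n, 1 ≤ n ∧ 0 < matPow q n i j

/-- irreducibility of the finite sub-matrix `(q(i,j))_{i,j < N}`. -/
def FinIrred (q : ℕ → ℕ → ℝ) (N : ℕ) : Prop :=
  ∀ i j, i < N → j < N → ∃ m, 1 ≤ m ∧ ∃ c : ℕ → ℕ,
    c 0 = i ∧ c m = j ∧ (∀ t ≤ m, c t < N) ∧ ∀ t < m, 0 < q (c t) (c (t + 1))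



open Set

section Digits
variable {b : ℕ}

variable (Pr : ℕ → Fin (b + 1) → ℝ)

/-- auxiliary: `Pr n` extended to `ℕ` by 0. -/
def Q (n w : ℕ) : ℝ := if h : w < b + 1 then Pr n ⟨w, h⟩ else 0

/-- cumulative distribution of `Pr n`. -/
def cum (n v : ℕ) : ℝ := ∑ w ∈ Finset.range v, Q Pr n w

lemma cum_succ (n v : ℕ) : cum Pr n (v + 1) = cum Pr n v + Q Pr n v :=
  Finset.sum_range_succ _ _

variable (hnn : ∀ n v, 0 ≤ Pr n v) (hsum : ∀ n, ∑ v, Pr n v = 1)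

include hnn in
lemma Q_nonneg (n w : ℕ) : 0 ≤ Q Pr n w := by
  unfold Q; split <;> simp [hnn]

include hnn in
lemma cum_mono (n : ℕ) {v v' : ℕ} (h : v ≤ v') : cum Pr n v ≤ cum Pr n v' :=
  Finset.sum_le_sum_of_subset_of_nonneg (Finset.range_subset_range.2 h)
    (fun w _ _ => Q_nonneg Pr hnn n w)

include hsum in
lemma cum_top (n : ℕ) : cum Pr n (b + 1) = 1 := by
  have : cum Pr n (b + 1) = ∑ v : Fin (b + 1), Pr n v := by
    rw [cum, ← Fin.sum_univ_eq_sum_range (fun w => Q Pr n w) (b+1)]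
    apply Finset.sum_congr rfl
    intro v _
    simp [Q, v.2]
  rw [this, hsum]

/-- digit selection in the interval `[a, c)`. -/
noncomputable def sel (n : ℕ) (a c u : ℝ) : Fin (b + 1) :=
  let S := Finset.univ.filter (fun v : Fin (b + 1) => a + (c - a) * cum Pr n v.1 ≤ u)
  if h : S.Nonempty then S.max' h else ⟨0, Nat.succ_pos b⟩

/-- the state (current interval) of the digit machine. -/
noncomputable def state : ℕ → ℝ → ℝ × ℝ
  | 0 => fun _ => (0, 1)
  | n + 1 => fun u =>
      let p := state n u
      let v := sel Pr n p.1 p.2 u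
      (p.1 + (p.2 - p.1) * cum Pr n v.1, p.1 + (p.2 - p.1) * cum Pr n (v.1 + 1))

/-- the `n`-th digit of `u`. -/
noncomputable def dig (n : ℕ) (u : ℝ) : Fin (b + 1) :=
  sel Pr n (state Pr n u).1 (state Pr n u).2 u

include hsum in
lemma sel_bounds {n : ℕ} {a c u : ℝ} (hau : a ≤ u) (huc : u < c) :
    a + (c - a) * cum Pr n (sel Pr n a c u).1 ≤ u ∧
      u < a + (c - a) * cum Pr n ((sel Pr n a c u).1 + 1) := by
  classical
  set S := Finset.univ.filter (fun v : Fin (b + 1) => a + (c - a) * cum Pr n v.1 ≤ u) with hS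
  have h0 : (⟨0, Nat.succ_pos b⟩ : Fin (b+1)) ∈ S := by
    simp only [hS, Finset.mem_filter, Finset.mem_univ, true_and]
    simpa [cum] using hau
  have hne : S.Nonempty := ⟨_, h0⟩
  have hsel : sel Pr n a c u = S.max' hne := by
    rw [sel]; simp only [← hS]
    rw [dif_pos hne]
  set v := S.max' hne with hv
  have hvS : v ∈ S := S.max'_mem hne
  have h1 : a + (c - a) * cum Pr n v.1 ≤ u := by
    have := hvS
    simp only [hS, Finset.mem_filter, Finset.mem_univ, true_and] at this
    exact this
  refine hsel ▸ ⟨h1, ?_⟩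
  by_cases hvb : v.1 = b
  · have : cum Pr n (v.1 + 1) = 1 := by rw [hvb]; exact cum_top Pr hsum n
    rw [this]; linarith
  · have hlt : v.1 + 1 < b + 1 := by omega
    by_contra hcon
    push_neg at hcon
    have : (⟨v.1 + 1, hlt⟩ : Fin (b+1)) ∈ S := by
      simp only [hS, Finset.mem_filter, Finset.mem_univ, true_and]
      exact hcon
    have := S.le_max' _ this
    rw [← hv] at this
    have : v.1 + 1 ≤ v.1 := this
    omega

include hsum in
lemma state_mem {u : ℝ} (hu : u ∈ Ico (0:ℝ) 1) (n : ℕ) :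
    (state Pr n u).1 ≤ u ∧ u < (state Pr n u).2 := by
  induction n with
  | zero => exact ⟨hu.1, hu.2⟩
  | succ n ih =>
      obtain ⟨h1, h2⟩ := ih
      exact sel_bounds Pr hsum h1 h2

/-- symbolic interval of a digit string. -/
noncomputable def ivl (d : ℕ → Fin (b + 1)) : ℕ → ℝ × ℝ
  | 0 => (0, 1)
  | n + 1 =>
      let p := ivl d n
      (p.1 + (p.2 - p.1) * cum Pr n (d n).1, p.1 + (p.2 - p.1) * cum Pr n ((d n).1 + 1))

lemma ivl_len (d : ℕ → Fin (b + 1)) (n : ℕ) :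
    (ivl Pr d n).2 - (ivl Pr d n).1 = ∏ k ∈ Finset.range n, Pr k (d k) := by
  induction n with
  | zero => simp [ivl]
  | succ n ih =>
      rw [Finset.prod_range_succ, ← ih]
      show (ivl Pr d n).1 + ((ivl Pr d n).2 - (ivl Pr d n).1) * cum Pr n ((d n).1 + 1)
          - ((ivl Pr d n).1 + ((ivl Pr d n).2 - (ivl Pr d n).1) * cum Pr n (d n).1) = _
      have : cum Pr n ((d n).1 + 1) = cum Pr n (d n).1 + Q Pr n (d n).1 := cum_succ Pr n _
      rw [this]
      have hQ : Q Pr n (d n).1 = Pr n (d n) := by simp [Q, (d n).2]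
      rw [hQ]; ring

include hnn hsum in
lemma ivl_sub (d : ℕ → Fin (b + 1)) (n : ℕ) :
    (ivl Pr d n).1 ≤ (ivl Pr d (n+1)).1 ∧ (ivl Pr d (n+1)).1 ≤ (ivl Pr d (n+1)).2 ∧
      (ivl Pr d (n+1)).2 ≤ (ivl Pr d n).2 := by
  have hlen : 0 ≤ (ivl Pr d n).2 - (ivl Pr d n).1 := by
    rw [ivl_len]
    exact Finset.prod_nonneg fun k _ => hnn k _
  have hc0 : 0 ≤ cum Pr n (d n).1 := Finset.sum_nonneg fun w _ => Q_nonneg Pr hnn n w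
  have hmono : cum Pr n (d n).1 ≤ cum Pr n ((d n).1 + 1) := cum_mono Pr hnn n (Nat.le_succ _)
  have htop : cum Pr n ((d n).1 + 1) ≤ 1 := by
    rw [← cum_top Pr hsum n]
    exact cum_mono Pr hnn n (d n).2
  constructor
  · show (ivl Pr d n).1 ≤ (ivl Pr d n).1 + ((ivl Pr d n).2 - (ivl Pr d n).1) * cum Pr n (d n).1
    nlinarith
  constructor
  · show (ivl Pr d n).1 + ((ivl Pr d n).2 - (ivl Pr d n).1) * cum Pr n (d n).1 ≤
        (ivl Pr d n).1 + ((ivl Pr d n).2 - (ivl Pr d n).1) * cum Pr n ((d n).1 + 1)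
    nlinarith
  · show (ivl Pr d n).1 + ((ivl Pr d n).2 - (ivl Pr d n).1) * cum Pr n ((d n).1 + 1) ≤ (ivl Pr d n).2
    nlinarith

omit hnn hsum in
lemma state_eq_ivl (d : ℕ → Fin (b + 1)) {u : ℝ} (n : ℕ)
    (h : ∀ k < n, dig Pr k u = d k) : state Pr n u = ivl Pr d n := by
  induction n with
  | zero => rfl
  | succ n ih =>
      have hih := ih (fun k hk => h k (Nat.lt_succ_of_lt hk))
      have hd : sel Pr n (state Pr n u).1 (state Pr n u).2 u = d n := h n (Nat.lt_succ_self n)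
      show (let p := state Pr n u; let v := sel Pr n p.1 p.2 u;
        (p.1 + (p.2 - p.1) * cum Pr n v.1, p.1 + (p.2 - p.1) * cum Pr n (v.1 + 1))) = _
      simp only []
      rw [hd, hih]
      rfl

include hnn hsum in
/-- main interval lemma. -/
lemma digits_iff_mem (d : ℕ → Fin (b + 1)) {u : ℝ} (hu : u ∈ Ico (0:ℝ) 1) (n : ℕ) :
    (∀ k < n, dig Pr k u = d k) ↔ u ∈ Ico (ivl Pr d n).1 (ivl Pr d n).2 := by
  induction n with
  | zero => simpa [ivl] using hu
  | succ n ih =>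
      constructor
      · intro h
        have hst : state Pr n u = ivl Pr d n :=
          state_eq_ivl Pr d n (fun k hk => h k (Nat.lt_succ_of_lt hk))
        have hmem := state_mem Pr hsum hu n
        rw [hst] at hmem
        have hb := sel_bounds Pr hsum (n := n) hmem.1 hmem.2
        have hd : sel Pr n (ivl Pr d n).1 (ivl Pr d n).2 u = d n := by
          rw [← hst]; exact h n (Nat.lt_succ_self n)
        rw [hd] at hb
        exact ⟨hb.1, hb.2⟩
      · intro h
        have hsub := ivl_sub Pr hnn hsum d n
        have hmemn : u ∈ Ico (ivl Pr d n).1 (ivl Pr d n).2 :=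
          ⟨le_trans hsub.1 h.1, lt_of_lt_of_le h.2 hsub.2.2⟩
        have hprev : ∀ k < n, dig Pr k u = d k := (ih).2 hmemn
        intro k hk
        rcases Nat.lt_succ_iff_lt_or_eq.1 hk with hk' | hk'
        · exact hprev k hk'
        · subst hk'
          -- show the k-th digit is d k
          have hst : state Pr k u = ivl Pr d k := state_eq_ivl Pr d k hprev
          have hmem := state_mem Pr hsum hu k
          have hb := sel_bounds Pr hsum (n := k) hmem.1 hmem.2
          show sel Pr k (state Pr k u).1 (state Pr k u).2 u = d k
          set v := sel Pr k (state Pr k u).1 (state Pr k u).2 u with hv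
          rw [hst] at hb
          by_contra hne
          rcases lt_or_gt_of_ne (fun hE => hne (Fin.ext hE) : v.1 ≠ (d k).1) with hlt | hlt
          · -- v < d k : u < endpoint(v+1) ≤ startpoint(d k) ≤ u
            have h1 : cum Pr k (v.1+1) ≤ cum Pr k (d k).1 := cum_mono Pr hnn k hlt
            have h2 := h.1
            simp only [ivl] at h2
            have hL : (0:ℝ) ≤ (ivl Pr d k).2 - (ivl Pr d k).1 := by
              rw [ivl_len]; exact Finset.prod_nonneg fun m _ => hnn m _
            nlinarith [hb.2, h2]
          · have h1 : cum Pr k ((d k).1 + 1) ≤ cum Pr k v.1 := cum_mono Pr hnn k hlt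
            have h2 := h.2
            simp only [ivl] at h2
            have hL : (0:ℝ) ≤ (ivl Pr d k).2 - (ivl Pr d k).1 := by
              rw [ivl_len]; exact Finset.prod_nonneg fun m _ => hnn m _
            nlinarith [hb.1, h2]

include hnn hsum in
lemma ivl_nested (d : ℕ → Fin (b + 1)) {m n : ℕ} (h : m ≤ n) :
    (ivl Pr d m).1 ≤ (ivl Pr d n).1 ∧ (ivl Pr d n).1 ≤ (ivl Pr d n).2 ∧
      (ivl Pr d n).2 ≤ (ivl Pr d m).2 := by
  induction n with
  | zero =>
      have : m = 0 := Nat.le_zero.1 h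
      subst this
      exact ⟨le_refl _, by norm_num [ivl], le_refl _⟩
  | succ n ih =>
      rcases Nat.le_succ_iff_eq_or_le.mp (h) with rfl | hle
      · exact ⟨le_refl _, (ivl_sub Pr hnn hsum d n).2.1, le_refl _⟩
      · have h1 := ih hle
        have h2 := ivl_sub Pr hnn hsum d n
        exact ⟨le_trans h1.1 h2.1, h2.2.1, le_trans h2.2.2 h1.2.2⟩

include hnn hsum in
/-- measure of a full digit cylinder. -/
lemma vol_cylinder (d : ℕ → Fin (b + 1)) (n : ℕ) :
    volume {u : ℝ | u ∈ Ico (0:ℝ) 1 ∧ ∀ k < n, dig Pr k u = d k}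
      = ENNReal.ofReal (∏ k ∈ Finset.range n, Pr k (d k)) := by
  have hset : {u : ℝ | u ∈ Ico (0:ℝ) 1 ∧ ∀ k < n, dig Pr k u = d k}
      = Ico (ivl Pr d n).1 (ivl Pr d n).2 := by
    ext u
    constructor
    · rintro ⟨hu, hd⟩
      exact (digits_iff_mem Pr hnn hsum d hu n).1 hd
    · intro hu
      have hnest := ivl_nested Pr hnn hsum d (Nat.zero_le n)
      have h01 : u ∈ Ico (0:ℝ) 1 := by
        constructor
        · have : (ivl Pr d 0).1 ≤ u := le_trans hnest.1 hu.1
          simpa [ivl] using this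
        · have : u < (ivl Pr d 0).2 := lt_of_lt_of_le hu.2 hnest.2.2
          simpa [ivl] using this
      exact ⟨h01, (digits_iff_mem Pr hnn hsum d h01 n).2 hu⟩
  rw [hset, Real.volume_Ico, ← ivl_len Pr d n]

include hnn hsum in
/-- measure of a generalized cylinder with finite coordinate set and per-coordinate
allowed-value sets. -/
lemma vol_cylinder_sets (E : Finset ℕ) (V : ℕ → Finset (Fin (b + 1))) :
    volume {u : ℝ | u ∈ Ico (0:ℝ) 1 ∧ ∀ m ∈ E, dig Pr m u ∈ V m}
      = ENNReal.ofReal (∏ m ∈ E, ∑ v ∈ V m, Pr m v) := by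
  classical
  obtain ⟨n, hn⟩ : ∃ n, ∀ m ∈ E, m < n := by
    rcases E.eq_empty_or_nonempty with rfl | hne
    · exact ⟨0, by simp⟩
    · exact ⟨E.max' hne + 1, fun m hm => Nat.lt_succ_of_le (E.le_max' m hm)⟩
  -- the index family
  set t : Fin n → Finset (Fin (b + 1)) := fun k => if (k : ℕ) ∈ E then V k else Finset.univ
    with ht
  set T := Fintype.piFinset t with hT
  -- set equality
  have hset : {u : ℝ | u ∈ Ico (0:ℝ) 1 ∧ ∀ m ∈ E, dig Pr m u ∈ V m}
      = ⋃ d ∈ T, {u : ℝ | u ∈ Ico (0:ℝ) 1 ∧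
          ∀ k < n, dig Pr k u = (fun k : ℕ => if h : k < n then d ⟨k, h⟩ else 0) k} := by
    ext u
    simp only [mem_iUnion, mem_setOf_eq]
    constructor
    · rintro ⟨hu, hd⟩
      refine ⟨fun k => dig Pr k u, ?_, hu, ?_⟩
      · rw [hT, Fintype.mem_piFinset]
        intro k
        rw [ht]
        dsimp only
        split
        · next hk => exact hd k hk
        · exact Finset.mem_univ _
      · intro k hk
        rw [dif_pos hk]
    · rintro ⟨d, hdT, hu, hdig⟩
      refine ⟨hu, fun m hm => ?_⟩
      have hmn : m < n := hn m hm
      have h1 : dig Pr m u = d ⟨m, hmn⟩ := by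
        have := hdig m hmn
        rwa [dif_pos hmn] at this
      rw [hT, Fintype.mem_piFinset] at hdT
      have := hdT ⟨m, hmn⟩
      rw [ht] at this
      simp only [hm, if_pos] at this
      rwa [h1]
  rw [hset]
  -- disjointness
  have hdisj : (↑T : Set (Fin n → Fin (b+1))).PairwiseDisjoint
      (fun d : Fin n → Fin (b+1) => {u : ℝ | u ∈ Ico (0:ℝ) 1 ∧
          ∀ k < n, dig Pr k u = (fun k : ℕ => if h : k < n then d ⟨k, h⟩ else 0) k}) := by
    intro d1 h1 d2 h2 hne
    refine Set.disjoint_left.2 ?_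
    rintro u ⟨hu, hd1⟩ ⟨hu', hd2⟩
    apply hne
    funext k
    have e1 := hd1 k k.2
    have e2 := hd2 k k.2
    dsimp only at e1 e2
    rw [dif_pos k.2] at e1 e2
    rw [← e1, ← e2]
  have hmeas : ∀ d ∈ T, MeasurableSet {u : ℝ | u ∈ Ico (0:ℝ) 1 ∧
      ∀ k < n, dig Pr k u = (fun k : ℕ => if h : k < n then d ⟨k, h⟩ else 0) k} := by
    intro d _
    have : {u : ℝ | u ∈ Ico (0:ℝ) 1 ∧
        ∀ k < n, dig Pr k u = (fun k : ℕ => if h : k < n then d ⟨k, h⟩ else 0) k}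
        = Ico (ivl Pr (fun k : ℕ => if h : k < n then d ⟨k, h⟩ else 0) n).1
            (ivl Pr (fun k : ℕ => if h : k < n then d ⟨k, h⟩ else 0) n).2 := by
      ext u
      constructor
      · rintro ⟨hu, hd⟩
        exact (digits_iff_mem Pr hnn hsum _ hu n).1 hd
      · intro hu
        have hnest := ivl_nested Pr hnn hsum (fun k : ℕ => if h : k < n then d ⟨k, h⟩ else 0)
          (Nat.zero_le n)
        have h01 : u ∈ Ico (0:ℝ) 1 := by
          constructor
          · have := le_trans hnest.1 hu.1
            simpa [ivl] using this
          · have := lt_of_lt_of_le hu.2 hnest.2.2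
            simpa [ivl] using this
        exact ⟨h01, (digits_iff_mem Pr hnn hsum _ h01 n).2 hu⟩
    rw [this]
    exact measurableSet_Ico
  rw [measure_biUnion_finset hdisj hmeas]
  -- compute the sum
  have hval : ∀ d ∈ T, volume {u : ℝ | u ∈ Ico (0:ℝ) 1 ∧
      ∀ k < n, dig Pr k u = (fun k : ℕ => if h : k < n then d ⟨k, h⟩ else 0) k}
      = ENNReal.ofReal (∏ k : Fin n, Pr k (d k)) := by
    intro d _
    rw [vol_cylinder Pr hnn hsum _ n]
    congr 1
    rw [← Fin.prod_univ_eq_prod_range (fun k => Pr k ((fun k : ℕ => if h : k < n then d ⟨k, h⟩ else 0) k)) n]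
    apply Finset.prod_congr rfl
    intro k _
    congr 1
    dsimp only
    rw [dif_pos k.2]
  rw [Finset.sum_congr rfl hval]
  rw [← ENNReal.ofReal_sum_of_nonneg (s := T)
    (f := fun d : Fin n → Fin (b+1) => ∏ k : Fin n, Pr (↑k) (d k))
    (fun d _ => Finset.prod_nonneg fun k _ => hnn (↑k) _)]
  congr 1
  rw [hT, ← Finset.prod_univ_sum t (fun k v => Pr k v)]
  -- now ∏ k : Fin n, ∑ v ∈ t k, Pr k v = ∏ m ∈ E, ∑ v ∈ V m, Pr m v
  have : ∀ k : Fin n, (∑ v ∈ t k, Pr k v) = (if (k:ℕ) ∈ E then ∑ v ∈ V k, Pr k v else 1) := by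
    intro k
    rw [ht]
    dsimp only
    split
    · rfl
    · exact hsum k
  rw [Finset.prod_congr rfl (fun k _ => this k)]
  rw [← Finset.prod_filter (fun k : Fin n => (k:ℕ) ∈ E) (fun k : Fin n => ∑ v ∈ V k, Pr k v)]
  apply Finset.prod_nbij (fun k : Fin n => (k : ℕ))
  · intro k hk
    simpa using (Finset.mem_filter.1 hk).2
  · intro k1 h1 k2 h2 h
    exact Fin.ext h
  · intro m hm
    simp only [Finset.coe_filter, Set.mem_image, Set.mem_setOf_eq]
    exact ⟨⟨m, hn m hm⟩, ⟨Finset.mem_univ _, hm⟩, rfl⟩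
  · intro k hk
    rfl

/-- clamp to `[0,1)`. -/
noncomputable def cl (u : ℝ) : ℝ := if u ∈ Ico (0:ℝ) 1 then u else 0

lemma cl_eq_self {u : ℝ} (hu : u ∈ Ico (0:ℝ) 1) : cl u = u := if_pos hu

lemma cl_mem (u : ℝ) : cl u ∈ Ico (0:ℝ) 1 := by
  unfold cl; split
  · assumption
  · norm_num

include hnn hsum in
lemma measurableSet_digfiber (m : ℕ) (v : Fin (b + 1)) :
    MeasurableSet {u : ℝ | u ∈ Ico (0:ℝ) 1 ∧ dig Pr m u = v} := by
  classical
  have hset : {u : ℝ | u ∈ Ico (0:ℝ) 1 ∧ dig Pr m u = v}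
      = ⋃ d ∈ (Finset.univ.filter (fun d : Fin (m+1) → Fin (b+1) => d ⟨m, Nat.lt_succ_self m⟩ = v)),
          {u : ℝ | u ∈ Ico (0:ℝ) 1 ∧
            ∀ k < m + 1, dig Pr k u = (fun k : ℕ => if h : k < m + 1 then d ⟨k, h⟩ else 0) k} := by
    ext u
    simp only [mem_iUnion, mem_setOf_eq, Finset.mem_filter, Finset.mem_univ, true_and]
    constructor
    · rintro ⟨hu, hv⟩
      refine ⟨fun k => dig Pr (k : ℕ) u, hv, hu, fun k hk => ?_⟩
      rw [dif_pos hk]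
    · rintro ⟨d, hdv, hu, hd⟩
      refine ⟨hu, ?_⟩
      have := hd m (Nat.lt_succ_self m)
      rw [dif_pos (Nat.lt_succ_self m)] at this
      rw [this, hdv]
  rw [hset]
  apply Finset.measurableSet_biUnion
  intro d _
  have : {u : ℝ | u ∈ Ico (0:ℝ) 1 ∧
      ∀ k < m + 1, dig Pr k u = (fun k : ℕ => if h : k < m + 1 then d ⟨k, h⟩ else 0) k}
      = Ico (ivl Pr (fun k : ℕ => if h : k < m + 1 then d ⟨k, h⟩ else 0) (m+1)).1
          (ivl Pr (fun k : ℕ => if h : k < m + 1 then d ⟨k, h⟩ else 0) (m+1)).2 := by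
    ext u
    constructor
    · rintro ⟨hu, hd⟩
      exact (digits_iff_mem Pr hnn hsum _ hu (m+1)).1 hd
    · intro hu
      have hnest := ivl_nested Pr hnn hsum (fun k : ℕ => if h : k < m + 1 then d ⟨k, h⟩ else 0)
        (Nat.zero_le (m+1))
      have h01 : u ∈ Ico (0:ℝ) 1 := by
        constructor
        · have := le_trans hnest.1 hu.1
          simpa [ivl] using this
        · have := lt_of_lt_of_le hu.2 hnest.2.2
          simpa [ivl] using this
      exact ⟨h01, (digits_iff_mem Pr hnn hsum _ h01 (m+1)).2 hu⟩
  rw [this]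
  exact measurableSet_Ico

include hnn hsum in
lemma measurable_digCl (m : ℕ) : Measurable (fun u : ℝ => dig Pr m (cl u)) := by
  apply measurable_to_countable'
  intro v
  have : (fun u : ℝ => dig Pr m (cl u)) ⁻¹' {v}
      = ({u : ℝ | u ∈ Ico (0:ℝ) 1 ∧ dig Pr m u = v} ∩ Ico (0:ℝ) 1)
        ∪ ((Ico (0:ℝ) 1)ᶜ ∩ (if dig Pr m (0:ℝ) = v then univ else ∅)) := by
    ext u
    simp only [mem_preimage, mem_singleton_iff, mem_union, mem_inter_iff, mem_setOf_eq,
      mem_compl_iff]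
    by_cases hu : u ∈ Ico (0:ℝ) 1
    · rw [cl_eq_self hu]
      constructor
      · intro h; exact Or.inl ⟨⟨hu, h⟩, hu⟩
      · rintro (⟨⟨_, h⟩, _⟩ | ⟨hc, _⟩)
        · exact h
        · exact absurd hu hc
    · have : cl u = 0 := if_neg hu
      rw [this]
      constructor
      · intro h
        refine Or.inr ⟨hu, ?_⟩
        rw [if_pos h]; trivial
      · rintro (⟨⟨hu', _⟩, _⟩ | ⟨_, hc⟩)
        · exact absurd hu' hu
        · by_cases hv : dig Pr m (0:ℝ) = v
          · exact hv
          · rw [if_neg hv] at hc; exact absurd hc (Set.notMem_empty u)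
  rw [this]
  apply MeasurableSet.union
  · exact (measurableSet_digfiber Pr hnn hsum m v).inter measurableSet_Ico
  · apply MeasurableSet.inter measurableSet_Ico.compl
    split
    · exact MeasurableSet.univ
    · exact MeasurableSet.empty

end Digits

section Seq
variable {b : ℕ}

/-- number of entries with value `v` among the first `N` entries of `s`. -/
def countVal (v : ℕ) (s : ℕ → Fin (b + 1)) (N : ℕ) : ℕ :=
  ((Finset.range N).filter (fun k => (s k).1 = v)).card

/-- the `j0`-th zero of `s` is at (one-based) position `N`. -/
def stopAt (j0 : ℕ) (s : ℕ → Fin (b + 1)) (N : ℕ) : Prop :=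
  0 < N ∧ countVal 0 s N = j0 ∧ (s (N - 1)).1 = 0

open Classical in
/-- the children-vector extraction function. -/
noncomputable def Ffun (j0 : ℕ) (s : ℕ → Fin (b + 1)) (a : Fin b) : ℕ :=
  if h : ∃ N, stopAt j0 s N then countVal (a.1 + 1) s (Nat.find h) else 0

lemma countVal_succ (v : ℕ) (s : ℕ → Fin (b + 1)) (N : ℕ) :
    countVal v s (N + 1) = countVal v s N + (if (s N).1 = v then 1 else 0) := by
  unfold countVal
  rw [Finset.range_add_one, Finset.filter_insert]
  split
  · rw [Finset.card_insert_of_notMem (by simp)]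
  · simp

lemma countVal_mono (v : ℕ) (s : ℕ → Fin (b + 1)) {N N' : ℕ} (h : N ≤ N') :
    countVal v s N ≤ countVal v s N' :=
  Finset.card_le_card (Finset.filter_subset_filter _ (Finset.range_subset_range.2 h))

lemma countVal_congr {v : ℕ} {s s' : ℕ → Fin (b + 1)} {N : ℕ}
    (h : ∀ k < N, s k = s' k) : countVal v s N = countVal v s' N := by
  unfold countVal
  congr 1
  apply Finset.filter_congr
  intro k hk
  rw [h k (Finset.mem_range.1 hk)]

lemma not_stopAt_zero (s : ℕ → Fin (b + 1)) (N : ℕ) : ¬ stopAt 0 s N := by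
  rintro ⟨hN, hc, hz⟩
  have : N - 1 ∈ (Finset.range N).filter (fun k => (s k).1 = 0) := by
    rw [Finset.mem_filter, Finset.mem_range]
    exact ⟨by omega, hz⟩
  have : 0 < countVal 0 s N := Finset.card_pos.2 ⟨_, this⟩
  omega

open Classical in
lemma Ffun_zero (s : ℕ → Fin (b + 1)) (a : Fin b) : Ffun 0 s a = 0 := by
  rw [Ffun, dif_neg]
  rintro ⟨N, hN⟩
  exact not_stopAt_zero s N hN

lemma stopAt_le {j0 j0' : ℕ} {s : ℕ → Fin (b + 1)} {N N' : ℕ}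
    (h : stopAt j0 s N) (h' : stopAt j0' s N') (hj : j0 ≤ j0') : N ≤ N' := by
  by_contra hcon
  push_neg at hcon
  -- N' < N : then countVal 0 s N ≥ countVal 0 s N' + 1
  have h1 : N' ≤ N - 1 := by omega
  have h2 : countVal 0 s N = countVal 0 s (N - 1) + 1 := by
    have hN1 : N = (N - 1) + 1 := by omega
    calc countVal 0 s N = countVal 0 s ((N - 1) + 1) := by rw [← hN1]
      _ = countVal 0 s (N - 1) + 1 := by rw [countVal_succ, if_pos h.2.2]
  have h3 : countVal 0 s N' ≤ countVal 0 s (N - 1) := countVal_mono 0 s h1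
  have := h.2.1
  have := h'.2.1
  omega

lemma stopAt_unique {j0 : ℕ} {s : ℕ → Fin (b + 1)} {N N' : ℕ}
    (h : stopAt j0 s N) (h' : stopAt j0 s N') : N = N' :=
  le_antisymm (stopAt_le h h' le_rfl) (stopAt_le h' h le_rfl)

open Classical in
lemma Ffun_of_stop {j0 : ℕ} {s : ℕ → Fin (b + 1)} {N : ℕ} (h : stopAt j0 s N) (a : Fin b) :
    Ffun j0 s a = countVal (a.1 + 1) s N := by
  rw [Ffun, dif_pos ⟨N, h⟩]
  congr 1
  exact stopAt_unique (Nat.find_spec ⟨N, h⟩) h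

/-- infinitely many zeros. -/
def InfZeros (s : ℕ → Fin (b + 1)) : Prop := ∀ m, ∃ k, m ≤ k ∧ (s k).1 = 0

lemma countVal_no_new {v : ℕ} {s : ℕ → Fin (b + 1)} {N k : ℕ} (h : N ≤ k)
    (hz : ∀ m, N ≤ m → m < k → (s m).1 ≠ v) : countVal v s k = countVal v s N := by
  induction k with
  | zero =>
      have : N = 0 := by omega
      rw [this]
  | succ k ih =>
      rcases Nat.lt_or_ge N (k+1) with hlt | hge
      · have hNk : N ≤ k := by omega
        rw [countVal_succ, ih hNk (fun m h1 h2 => hz m h1 (by omega)), if_neg (hz k hNk (by omega))]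
        omega
      · have : N = k + 1 := by omega
        rw [this]

lemma exists_stop {s : ℕ → Fin (b + 1)} (hs : InfZeros s) {j0 : ℕ} (hj : 1 ≤ j0) :
    ∃ N, stopAt j0 s N := by
  induction j0 with
  | zero => omega
  | succ j0 ih =>
      rcases Nat.eq_zero_or_pos j0 with rfl | h1
      · have hex : ∃ k, (s k).1 = 0 := by
          obtain ⟨k, _, hk⟩ := hs 0
          exact ⟨k, hk⟩
        set k := Nat.find hex with hk
        refine ⟨k + 1, by omega, ?_, ?_⟩
        · rw [countVal_succ, if_pos (Nat.find_spec hex)]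
          have : countVal 0 s k = countVal 0 s 0 := by
            apply countVal_no_new (Nat.zero_le k)
            intro m _ hm
            exact Nat.find_min hex hm
          rw [this]
          rfl
        · simpa [hk] using Nat.find_spec hex
      · obtain ⟨N, hN⟩ := ih h1
        have hex : ∃ k, N ≤ k ∧ (s k).1 = 0 := hs N
        set k := Nat.find hex with hk
        obtain ⟨hNk, hkz⟩ := Nat.find_spec hex
        refine ⟨k + 1, by omega, ?_, by simpa [hk] using hkz⟩
        rw [countVal_succ, if_pos hkz]
        have : countVal 0 s k = countVal 0 s N := by
          apply countVal_no_new hNk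
          intro m h1 h2 hmz
          exact Nat.find_min hex h2 ⟨h1, hmz⟩
        rw [this, hN.2.1]

lemma Ffun_mono {s : ℕ → Fin (b + 1)} (hs : InfZeros s) {j0 j0' : ℕ} (h : j0 ≤ j0')
    (a : Fin b) : Ffun j0 s a ≤ Ffun j0' s a := by
  rcases Nat.eq_zero_or_pos j0 with rfl | hpos
  · rw [Ffun_zero]; exact Nat.zero_le _
  · obtain ⟨N, hN⟩ := exists_stop hs hpos
    obtain ⟨N', hN'⟩ := exists_stop hs (le_trans hpos h)
    rw [Ffun_of_stop hN, Ffun_of_stop hN']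
    exact countVal_mono _ s (stopAt_le hN hN' h)

/-- total-count partition. -/
lemma countVal_partition (s : ℕ → Fin (b + 1)) (N : ℕ) :
    N = ∑ v : Fin (b + 1), countVal v.1 s N := by
  have := Finset.card_eq_sum_card_fiberwise
    (f := fun k => s k) (s := Finset.range N) (t := Finset.univ) (fun x _ => Finset.mem_univ _)
  rw [Finset.card_range] at this
  conv_lhs => rw [this]
  apply Finset.sum_congr rfl
  intro v _
  unfold countVal
  congr 1
  apply Finset.filter_congr
  intro k _
  constructor
  · intro h
    try simp only [] at h
    rw [h]
  · intro h; exact Fin.ext h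

end Seq

section Cookie
variable (b : ℕ) (C : Env)

lemma str_bounds {i : ℕ} (hi : 1 ≤ i) : 0 ≤ C.str i ∧ C.str i < 1 := by
  unfold Env.str
  split
  · exact C.hp i hi ‹_›
  · exact ⟨le_of_lt C.hq0, C.hq1⟩

/-- distribution of `ξ_i` as a function on `Fin (b+1)`. -/
noncomputable def xiD (i : ℕ) : Fin (b + 1) → ℝ := fun v => xiProb b C i v.1

lemma xiD_nonneg (hb : 1 ≤ b) {i : ℕ} (hi : 1 ≤ i) (v : Fin (b + 1)) : 0 ≤ xiD b C i v := by
  obtain ⟨h0, h1⟩ := str_bounds C hi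
  unfold xiD xiProb
  split
  · linarith
  · split
    · positivity
    · exact le_refl 0

lemma xiD_zero (i : ℕ) : xiD b C i 0 = 1 - C.str i := by
  simp [xiD, xiProb]

lemma xiD_succ (hb : 1 ≤ b) {i : ℕ} (v : Fin b) : xiD b C i v.succ = C.str i / b := by
  unfold xiD xiProb
  rw [if_neg (by simp [Fin.val_succ]), if_pos (by simp only [Fin.val_succ]; omega)]

lemma xiD_sum_succ (hb : 1 ≤ b) (i : ℕ) : ∑ v : Fin b, xiD b C i v.succ = C.str i := by
  have hbne : (b : ℝ) ≠ 0 := Nat.cast_ne_zero.2 (by omega)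
  rw [Finset.sum_congr rfl (fun v _ => xiD_succ b C hb v), Finset.sum_const, Finset.card_univ,
    Fintype.card_fin, nsmul_eq_mul, mul_comm, div_mul_cancel₀ _ hbne]

lemma xiD_sum_nonzero (hb : 1 ≤ b) (i : ℕ) :
    ∑ v ∈ Finset.univ.filter (fun v : Fin (b + 1) => v.1 ≠ 0), xiD b C i v = C.str i := by
  rw [Finset.sum_filter, Fin.sum_univ_succ]
  simp only [Fin.val_zero, ne_eq, not_true_eq_false, if_false, Fin.val_succ, zero_add]
  rw [← xiD_sum_succ b C hb i]
  apply Finset.sum_congr rfl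
  intro v _
  rw [if_pos (by omega)]

lemma xiD_sum (hb : 1 ≤ b) (i : ℕ) : ∑ v, xiD b C i v = 1 := by
  rw [Fin.sum_univ_succ, xiD_zero, xiD_sum_succ b C hb i]
  ring

/-- the digit distributions: coordinate `encode (x, k)` carries the law of `ξ_{k+1}`. -/
noncomputable def Pdist : ℕ → Fin (b + 1) → ℝ := fun m =>
  match Encodable.decode (α := Vertex b × ℕ) m with
  | some p => xiD b C (p.2 + 1)
  | none => xiD b C 1

lemma Pdist_nonneg (hb : 1 ≤ b) : ∀ m v, 0 ≤ Pdist b C m v := by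
  intro m v
  unfold Pdist
  cases Encodable.decode (α := Vertex b × ℕ) m with
  | none => exact xiD_nonneg b C hb le_rfl v
  | some p => exact xiD_nonneg b C hb (by omega) v

lemma Pdist_sum (hb : 1 ≤ b) : ∀ m, ∑ v, Pdist b C m v = 1 := by
  intro m
  unfold Pdist
  cases Encodable.decode (α := Vertex b × ℕ) m with
  | none => exact xiD_sum b C hb 1
  | some p => exact xiD_sum b C hb _

lemma Pdist_encode (x : Vertex b) (k : ℕ) :
    Pdist b C (Encodable.encode (x, k)) = xiD b C (k + 1) := by
  unfold Pdist
  rw [Encodable.encodek]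

/-- the cookie variables : an i.i.d.-type family indexed by `Vertex b × ℕ`. -/
noncomputable def Xi (x : Vertex b) (k : ℕ) (u : ℝ) : Fin (b + 1) :=
  dig (Pdist b C) (Encodable.encode (x, k)) (cl u)

/-- the cookie sequence attached to the vertex `x`. -/
noncomputable def XiS (x : Vertex b) (u : ℝ) : ℕ → Fin (b + 1) := fun k => Xi b C x k u

/-- the underlying probability measure : Lebesgue on `[0,1)`. -/
noncomputable def Pvol : Measure ℝ := volume.restrict (Ico 0 1)

instance : IsProbabilityMeasure (Pvol) := by
  constructor
  rw [Pvol, Measure.restrict_apply MeasurableSet.univ, Set.univ_inter, Real.volume_Ico]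
  norm_num

variable (hb : 1 ≤ b)

include hb in
lemma measurable_Xi (x : Vertex b) (k : ℕ) : Measurable (fun u => Xi b C x k u) :=
  measurable_digCl (Pdist b C) (Pdist_nonneg b C hb) (Pdist_sum b C hb) _

include hb in
lemma measurable_XiS (x : Vertex b) : Measurable (fun u => XiS b C x u) :=
  measurable_pi_lambda _ (fun k => measurable_Xi b C hb x k)

include hb in
/-- probability of a joint prefix-cylinder event. -/
lemma P_cyl (t : Finset (Vertex b)) (Nsp : Vertex b → ℕ) (esp : Vertex b → ℕ → Fin (b + 1)) :
    Pvol (⋂ x ∈ t, {u : ℝ | ∀ k < Nsp x, Xi b C x k u = esp x k})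
      = ENNReal.ofReal (∏ x ∈ t, ∏ k ∈ Finset.range (Nsp x), xiProb b C (k + 1) (esp x k).1) := by
  classical
  rw [Pvol, Measure.restrict_apply' measurableSet_Ico]
  set E : Finset ℕ := t.biUnion (fun x => (Finset.range (Nsp x)).image
    (fun k => Encodable.encode (x, k))) with hE
  set A : ℕ → Fin (b + 1) := fun m =>
    match Encodable.decode (α := Vertex b × ℕ) m with
    | some p => esp p.1 p.2
    | none => 0 with hA
  have hAe : ∀ (x : Vertex b) (k : ℕ), A (Encodable.encode (x, k)) = esp x k := by
    intro x k
    rw [hA]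
    simp only [Encodable.encodek]
  have hset : (⋂ x ∈ t, {u : ℝ | ∀ k < Nsp x, Xi b C x k u = esp x k}) ∩ Ico (0:ℝ) 1
      = {u : ℝ | u ∈ Ico (0:ℝ) 1 ∧ ∀ m ∈ E, dig (Pdist b C) m u ∈ ({A m} : Finset (Fin (b+1)))} := by
    ext u
    simp only [mem_inter_iff, mem_iInter, mem_setOf_eq, Finset.mem_singleton, hE,
      Finset.mem_biUnion, Finset.mem_image, Finset.mem_range]
    constructor
    · rintro ⟨h1, h2⟩
      refine ⟨h2, ?_⟩
      rintro m ⟨x, hx, k, hk, rfl⟩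
      have := h1 x hx k hk
      rw [Xi, cl_eq_self h2] at this
      rw [this, hAe]
    · rintro ⟨h1, h2⟩
      refine ⟨?_, h1⟩
      intro x hx k hk
      have := h2 (Encodable.encode (x, k)) ⟨x, hx, k, hk, rfl⟩
      rw [Xi, cl_eq_self h1, this, hAe]
  rw [hset, vol_cylinder_sets (Pdist b C) (Pdist_nonneg b C hb) (Pdist_sum b C hb) E _]
  congr 1
  have hdisj : (↑t : Set (Vertex b)).PairwiseDisjoint
      (fun x => (Finset.range (Nsp x)).image (fun k => Encodable.encode (x, k))) := by
    intro x1 h1 x2 h2 hne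
    simp only [Function.onFun]
    rw [Finset.disjoint_left]
    intro m hm1 hm2
    simp only [Finset.mem_image, Finset.mem_range] at hm1 hm2
    obtain ⟨k1, _, e1⟩ := hm1
    obtain ⟨k2, _, e2⟩ := hm2
    apply hne
    have : (x1, k1) = (x2, k2) := Encodable.encode_injective (e1.trans e2.symm)
    exact congrArg Prod.fst this
  rw [hE, Finset.prod_biUnion hdisj]
  apply Finset.prod_congr rfl
  intro x hx
  rw [Finset.prod_image (fun k1 _ k2 _ h => by
    have : (x, k1) = (x, k2) := Encodable.encode_injective h
    exact congrArg Prod.snd this)]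
  apply Finset.prod_congr rfl
  intro k hk
  rw [Finset.sum_singleton, hAe, Pdist_encode]
  rfl


/-- a uniform bound on the cookie strengths. -/
noncomputable def theta (C : Env) : ℝ :=
  max C.q ((Finset.Icc 1 C.M).sup' ⟨1, by simp [C.hM]⟩ C.p)

lemma theta_lt_one : theta C < 1 := by
  rw [theta, max_lt_iff]
  refine ⟨C.hq1, ?_⟩
  refine (Finset.sup'_lt_iff _).2 ?_
  intro i hi
  rw [Finset.mem_Icc] at hi
  exact (C.hp i hi.1 hi.2).2

lemma theta_nonneg : 0 ≤ theta C := le_trans (le_of_lt C.hq0) (le_max_left _ _)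

lemma str_le_theta {i : ℕ} (hi : 1 ≤ i) : C.str i ≤ theta C := by
  unfold Env.str
  split
  · exact le_trans (Finset.le_sup' C.p (Finset.mem_Icc.2 ⟨hi, ‹_›⟩)) (le_max_right _ _)
  · exact le_max_left _ _

include hb in
lemma P_tail_null (x : Vertex b) (m : ℕ) :
    Pvol {u : ℝ | ∀ k, m ≤ k → (Xi b C x k u).1 ≠ 0} = 0 := by
  classical
  have key : ∀ K : ℕ, Pvol {u : ℝ | ∀ k, m ≤ k → (Xi b C x k u).1 ≠ 0}
      ≤ ENNReal.ofReal (theta C ^ K) := by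
    intro K
    have hsub : {u : ℝ | ∀ k, m ≤ k → (Xi b C x k u).1 ≠ 0}
        ⊆ {u : ℝ | ∀ k ∈ Finset.Ico m (m + K), (Xi b C x k u).1 ≠ 0} := by
      intro u hu k hk
      exact hu k (Finset.mem_Ico.1 hk).1
    refine le_trans (measure_mono hsub) ?_
    rw [Pvol, Measure.restrict_apply' measurableSet_Ico]
    set EK : Finset ℕ := (Finset.Ico m (m + K)).image (fun k => Encodable.encode (x, k)) with hEK
    set V : ℕ → Finset (Fin (b+1)) := fun _ => Finset.univ.filter (fun v : Fin (b+1) => v.1 ≠ 0)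
      with hV
    have hset : {u : ℝ | ∀ k ∈ Finset.Ico m (m + K), (Xi b C x k u).1 ≠ 0} ∩ Ico (0:ℝ) 1
        = {u : ℝ | u ∈ Ico (0:ℝ) 1 ∧ ∀ mm ∈ EK, dig (Pdist b C) mm u ∈ V mm} := by
      ext u
      simp only [mem_inter_iff, mem_setOf_eq, hEK, Finset.mem_image, hV, Finset.mem_filter,
        Finset.mem_univ, true_and]
      constructor
      · rintro ⟨h1, h2⟩
        refine ⟨h2, ?_⟩
        rintro mm ⟨k, hk, rfl⟩
        have := h1 k hk
        rwa [Xi, cl_eq_self h2] at this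
      · rintro ⟨h1, h2⟩
        refine ⟨?_, h1⟩
        intro k hk
        have := h2 (Encodable.encode (x, k)) ⟨k, hk, rfl⟩
        rwa [Xi, cl_eq_self h1]
    rw [hset, vol_cylinder_sets (Pdist b C) (Pdist_nonneg b C hb) (Pdist_sum b C hb) EK V]
    apply ENNReal.ofReal_le_ofReal
    rw [hEK, Finset.prod_image (fun k1 _ k2 _ h => by
      have : (x, k1) = (x, k2) := Encodable.encode_injective h
      exact congrArg Prod.snd this)]
    have hterm : ∀ k ∈ Finset.Ico m (m + K),
        (∑ v ∈ V (Encodable.encode (x, k)), Pdist b C (Encodable.encode (x, k)) v)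
          = C.str (k + 1) := by
      intro k _
      rw [hV, Pdist_encode]
      exact xiD_sum_nonzero b C hb (k + 1)
    rw [Finset.prod_congr rfl hterm]
    calc ∏ k ∈ Finset.Ico m (m + K), C.str (k + 1)
        ≤ ∏ _k ∈ Finset.Ico m (m + K), theta C := by
          apply Finset.prod_le_prod
          · intro k _; exact (str_bounds C (by omega)).1
          · intro k _; exact str_le_theta C (by omega)
      _ = theta C ^ K := by rw [Finset.prod_const, Nat.card_Ico, Nat.add_sub_cancel_left]
  have hlim : Filter.Tendsto (fun K : ℕ => ENNReal.ofReal (theta C ^ K))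
      Filter.atTop (nhds 0) := by
    have h1 : Filter.Tendsto (fun K : ℕ => theta C ^ K) Filter.atTop (nhds 0) :=
      tendsto_pow_atTop_nhds_zero_of_lt_one (theta_nonneg C) (theta_lt_one C)
    have := ENNReal.tendsto_ofReal h1
    simpa using this
  exact le_antisymm (ge_of_tendsto' hlim key) (zero_le)

/-- the good event : every vertex sequence has infinitely many zeros. -/
def GoodU : Set ℝ := {u : ℝ | ∀ x : Vertex b, InfZeros (XiS b C x u)}

include hb in
lemma P_goodU_compl : Pvol (GoodU b C)ᶜ = 0 := by
  have hsub : (GoodU b C)ᶜ ⊆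
      ⋃ x : Vertex b, ⋃ m : ℕ, {u : ℝ | ∀ k, m ≤ k → (Xi b C x k u).1 ≠ 0} := by
    intro u hu
    simp only [GoodU, mem_compl_iff, mem_setOf_eq, not_forall] at hu
    obtain ⟨x, hx⟩ := hu
    rw [InfZeros] at hx
    push_neg at hx
    obtain ⟨m, hm⟩ := hx
    simp only [mem_iUnion, mem_setOf_eq]
    exact ⟨x, m, fun k hk => (hm k hk)⟩
  apply measure_mono_null hsub
  apply measure_iUnion_null
  intro x
  apply measure_iUnion_null
  intro m
  exact P_tail_null b C hb x m

omit hb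

lemma measurable_countVal (v N : ℕ) :
    Measurable (fun s : ℕ → Fin (b + 1) => countVal v s N) := by
  have : (fun s : ℕ → Fin (b + 1) => countVal v s N)
      = fun s => ∑ k ∈ Finset.range N, (if (s k).1 = v then 1 else 0) := by
    funext s
    rw [countVal, Finset.card_filter]
  rw [this]
  apply Finset.measurable_sum
  intro k _
  exact (measurable_from_top (f := fun vv : Fin (b+1) => if vv.1 = v then (1:ℕ) else 0)).comp
    (measurable_pi_apply k)

lemma measurableSet_stopAt (j0 N : ℕ) :
    MeasurableSet {s : ℕ → Fin (b + 1) | stopAt j0 s N} := by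
  have : {s : ℕ → Fin (b + 1) | stopAt j0 s N}
      = (if 0 < N then univ else ∅) ∩ ((fun s : ℕ → Fin (b+1) => countVal 0 s N) ⁻¹' {j0})
        ∩ ((fun s : ℕ → Fin (b+1) => s (N-1)) ⁻¹' {v : Fin (b+1) | v.1 = 0}) := by
    ext s
    simp only [stopAt, mem_inter_iff, mem_setOf_eq, mem_preimage, mem_singleton_iff]
    constructor
    · rintro ⟨h1, h2, h3⟩
      rw [if_pos h1]
      exact ⟨⟨trivial, h2⟩, h3⟩
    · rintro ⟨⟨h1, h2⟩, h3⟩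
      by_cases hN : 0 < N
      · exact ⟨hN, h2, h3⟩
      · rw [if_neg hN] at h1; exact absurd h1 (Set.notMem_empty s)
  rw [this]
  refine (MeasurableSet.inter ?_ ((measurable_countVal b 0 N) (measurableSet_singleton _))).inter
    ((measurable_pi_apply (N-1)) (by exact trivial))
  split
  · exact MeasurableSet.univ
  · exact MeasurableSet.empty

lemma measurableSet_FfunFiber (j0 : ℕ) (a : Fin b) (m : ℕ) :
    MeasurableSet {s : ℕ → Fin (b + 1) | Ffun j0 s a = m} := by
  classical
  have hset : {s : ℕ → Fin (b + 1) | Ffun j0 s a = m}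
      = (⋃ N : ℕ, ({s | stopAt j0 s N} ∩ ((fun s : ℕ → Fin (b+1) => countVal (a.1+1) s N) ⁻¹' {m})))
        ∪ ((⋃ N : ℕ, {s : ℕ → Fin (b+1) | stopAt j0 s N})ᶜ ∩ (if m = 0 then univ else ∅)) := by
    ext s
    simp only [mem_union, mem_iUnion, mem_inter_iff, mem_setOf_eq, mem_preimage,
      mem_singleton_iff, mem_compl_iff, not_exists]
    constructor
    · intro h
      by_cases hex : ∃ N, stopAt j0 s N
      · obtain ⟨N, hN⟩ := hex
        left
        refine ⟨N, hN, ?_⟩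
        rw [← h, Ffun_of_stop hN]
      · right
        refine ⟨fun N hN => hex ⟨N, hN⟩, ?_⟩
        rw [Ffun, dif_neg hex] at h
        rw [if_pos h.symm]
        trivial
    · rintro (⟨N, hN, hc⟩ | ⟨hno, hm⟩)
      · rw [Ffun_of_stop hN, hc]
      · have hex : ¬ ∃ N, stopAt j0 s N := fun ⟨N, hN⟩ => hno N hN
        rw [Ffun, dif_neg hex]
        by_cases h0 : m = 0
        · rw [h0]
        · rw [if_neg h0] at hm; exact absurd hm (Set.notMem_empty s)
  rw [hset]
  apply MeasurableSet.union
  · apply MeasurableSet.iUnion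
    intro N
    exact (measurableSet_stopAt b j0 N).inter
      ((measurable_countVal b (a.1+1) N) (measurableSet_singleton _))
  · refine MeasurableSet.inter ?_ ?_
    · exact (MeasurableSet.iUnion (fun N => measurableSet_stopAt b j0 N)).compl
    · split
      · exact MeasurableSet.univ
      · exact MeasurableSet.empty

include hb in
lemma measurableSet_Dev (x : Vertex b) (j0 : ℕ) (w : Fin b → ℕ) :
    MeasurableSet {u : ℝ | ∀ a : Fin b, Ffun j0 (XiS b C x u) a = w a} := by
  have : {u : ℝ | ∀ a : Fin b, Ffun j0 (XiS b C x u) a = w a}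
      = ⋂ a : Fin b, (fun u => XiS b C x u) ⁻¹' {s | Ffun j0 s a = w a} := by
    ext u
    simp only [mem_iInter, mem_preimage, mem_setOf_eq]
  rw [this]
  exact MeasurableSet.iInter
    (fun a => (measurable_XiS b C hb x) (measurableSet_FfunFiber b j0 a (w a)))

include hb in
lemma measurableSet_cylEvent (x : Vertex b) (N : ℕ) (e : ℕ → Fin (b + 1)) :
    MeasurableSet {u : ℝ | ∀ k < N, Xi b C x k u = e k} := by
  have : {u : ℝ | ∀ k < N, Xi b C x k u = e k}
      = ⋂ k ∈ Finset.range N, (fun u => Xi b C x k u) ⁻¹' {e k} := by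
    ext u
    simp only [mem_iInter, mem_preimage, mem_singleton_iff, Finset.mem_range, mem_setOf_eq]
  rw [this]
  exact MeasurableSet.biInter (Finset.range N).countable_toSet
    (fun k _ => (measurable_Xi b C hb x k) (measurableSet_singleton _))

/-- the set of admissible cookie realizations for a particle at `j0` with children
vector `w` : exactly the index set of `childLaw`. -/
def validSet (j0 : ℕ) (w : Fin b → ℕ) : Finset (Fin (j0 + ∑ i, w i) → Fin (b + 1)) :=
  Finset.univ.filter (fun e =>
    (Finset.univ.filter fun k => (e k).1 = 0).card = j0 ∧
    (∀ i : Fin b, (Finset.univ.filter fun k => (e k).1 = i.1 + 1).card = w i) ∧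
    ∀ k, k.1 + 1 = j0 + ∑ i, w i → (e k).1 = 0)

lemma childLaw_eq_sum {j0 : ℕ} (hj0 : j0 ≠ 0) (w : Fin b → ℕ) :
    childLaw b C j0 w = ∑ e ∈ validSet b j0 w, seqWeight b C e := by
  rw [childLaw, if_neg hj0]
  rfl

lemma countVal_eq_fincard (v : ℕ) (s : ℕ → Fin (b + 1)) (L : ℕ) :
    countVal v s L = (Finset.univ.filter (fun k : Fin L => (s k.1).1 = v)).card := by
  rw [countVal, Finset.card_filter, Finset.card_filter,
    ← Fin.sum_univ_eq_sum_range (fun k => if (s k).1 = v then 1 else 0) L]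

lemma xiProb_nonneg (hb1 : 1 ≤ b) {i : ℕ} (hi : 1 ≤ i) (v : ℕ) : 0 ≤ xiProb b C i v := by
  obtain ⟨h0, h1⟩ := str_bounds C hi
  unfold xiProb
  split
  · linarith
  · split
    · positivity
    · exact le_refl 0

lemma seqWeight_nonneg (hb1 : 1 ≤ b) {N : ℕ} (e : Fin N → Fin (b + 1)) :
    0 ≤ seqWeight b C e :=
  Finset.prod_nonneg (fun k _ => xiProb_nonneg b C hb1 (by omega) _)

lemma childLaw_nonneg (hb1 : 1 ≤ b) (j0 : ℕ) (w : Fin b → ℕ) : 0 ≤ childLaw b C j0 w := by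
  rw [childLaw]
  split
  · split
    · norm_num
    · exact le_refl 0
  · exact Finset.sum_nonneg (fun e _ => seqWeight_nonneg b C hb1 e)

/-- (E1) a valid prefix forces the children vector. -/
lemma Ffun_of_validPrefix {j0 : ℕ} (hj0 : j0 ≠ 0) {w : Fin b → ℕ}
    {e : Fin (j0 + ∑ i, w i) → Fin (b + 1)} (he : e ∈ validSet b j0 w)
    {s : ℕ → Fin (b + 1)} (hpref : ∀ k (hk : k < j0 + ∑ i, w i), s k = e ⟨k, hk⟩)
    (a : Fin b) : Ffun j0 s a = w a := by
  have hLpos : 0 < j0 + ∑ i, w i := by omega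
  rw [validSet, Finset.mem_filter] at he
  obtain ⟨-, hz, hcnt, hlast⟩ := he
  have hcv : ∀ v : ℕ, countVal v s (j0 + ∑ i, w i)
      = (Finset.univ.filter (fun k : Fin (j0 + ∑ i, w i) => (e k).1 = v)).card := by
    intro v
    rw [countVal_eq_fincard]
    congr 1
    apply Finset.filter_congr
    intro k _
    rw [hpref k.1 k.2]
  have hstop : stopAt j0 s (j0 + ∑ i, w i) := by
    refine ⟨hLpos, ?_, ?_⟩
    · rw [hcv 0]; exact hz
    · have hlt : j0 + (∑ i, w i) - 1 < j0 + ∑ i, w i := by omega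
      have hlast' := hlast ⟨j0 + (∑ i, w i) - 1, hlt⟩ (by simp only [Fin.val_mk]; omega)
      rw [hpref (j0 + (∑ i, w i) - 1) hlt]
      exact hlast'
  rw [Ffun_of_stop hstop, hcv (a.1 + 1)]
  exact hcnt a

/-- (E2) conversely, a stopped sequence with children vector `w` has a valid prefix. -/
lemma validPrefix_of_Ffun {j0 : ℕ} (hj0 : j0 ≠ 0) {w : Fin b → ℕ} {s : ℕ → Fin (b + 1)}
    {N : ℕ} (hN : stopAt j0 s N) (hF : ∀ a : Fin b, Ffun j0 s a = w a) :
    N = j0 + ∑ i, w i ∧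
      (fun k : Fin (j0 + ∑ i, w i) => s k.1) ∈ validSet b j0 w := by
  have hcnt : ∀ a : Fin b, countVal (a.1 + 1) s N = w a := by
    intro a
    rw [← Ffun_of_stop hN a]
    exact hF a
  have hNeq : N = j0 + ∑ i, w i := by
    have hpart := countVal_partition s N
    rw [Fin.sum_univ_succ] at hpart
    have h0 : countVal (0 : Fin (b+1)).1 s N = j0 := hN.2.1
    have hsucc : ∀ v : Fin b, countVal (v.succ).1 s N = w v := by
      intro v
      rw [Fin.val_succ]
      exact hcnt v
    rw [h0] at hpart
    rw [Finset.sum_congr rfl (fun v _ => hsucc v)] at hpart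
    exact hpart
  refine ⟨hNeq, ?_⟩
  rw [validSet, Finset.mem_filter]
  refine ⟨Finset.mem_univ _, ?_, ?_, ?_⟩
  · rw [← countVal_eq_fincard, ← hNeq]
    exact hN.2.1
  · intro a
    rw [← countVal_eq_fincard, ← hNeq]
    exact hcnt a
  · intro k hk
    have hkN : k.1 = N - 1 := by omega
    show (s k.1).1 = 0
    rw [hkN]
    exact hN.2.2

/-- extension of a finite prefix by zeros. -/
def eExt {L : ℕ} (e : Fin L → Fin (b + 1)) : ℕ → Fin (b + 1) :=
  fun k => if h : k < L then e ⟨k, h⟩ else 0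

lemma cylweight_eq_seqWeight (hb1 : 1 ≤ b) {L : ℕ} (e : Fin L → Fin (b + 1)) :
    ∏ k ∈ Finset.range L, xiProb b C (k + 1) ((eExt b e) k).1 = seqWeight b C e := by
  rw [seqWeight, ← Fin.prod_univ_eq_prod_range (fun k => xiProb b C (k + 1) ((eExt b e) k).1) L]
  apply Finset.prod_congr rfl
  intro k _
  unfold eExt
  rw [dif_pos k.2]

include hb in
/-- the workhorse : joint law of prefix-cylinders and children-vector events. -/
lemma workhorse (s : Finset (Vertex b)) :
    ∀ (t : Finset (Vertex b)) (Nsp : Vertex b → ℕ) (esp : Vertex b → ℕ → Fin (b + 1)),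
      Disjoint t s → ∀ (j0 : Vertex b → ℕ) (w : Vertex b → Fin b → ℕ),
    Pvol ((⋂ x ∈ t, {u : ℝ | ∀ k < Nsp x, Xi b C x k u = esp x k}) ∩
          ⋂ x ∈ s, {u : ℝ | ∀ a : Fin b, Ffun (j0 x) (XiS b C x u) a = w x a})
      = ENNReal.ofReal ((∏ x ∈ t, ∏ k ∈ Finset.range (Nsp x), xiProb b C (k + 1) (esp x k).1)
          * ∏ x ∈ s, childLaw b C (j0 x) (w x)) := by
  classical
  induction s using Finset.induction_on with
  | empty =>
      intro t Nsp esp _ j0 w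
      have : (⋂ x ∈ (∅ : Finset (Vertex b)),
          {u : ℝ | ∀ a : Fin b, Ffun (j0 x) (XiS b C x u) a = w x a}) = univ := by
        simp
      rw [this, inter_univ, Finset.prod_empty, mul_one]
      exact P_cyl b C hb t Nsp esp
  | @insert y s hy ih =>
      intro t Nsp esp hdisj j0 w
      have hyt : y ∉ t := fun hyt => (Finset.disjoint_left.1 hdisj hyt (Finset.mem_insert_self y s))
      have hdisj' : Disjoint t s := Finset.disjoint_of_subset_right (Finset.subset_insert y s) hdisj
      rw [Finset.set_biInter_insert]
      set T := ⋂ x ∈ t, {u : ℝ | ∀ k < Nsp x, Xi b C x k u = esp x k} with hT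
      set R := ⋂ x ∈ s, {u : ℝ | ∀ a : Fin b, Ffun (j0 x) (XiS b C x u) a = w x a} with hR
      set Dy := {u : ℝ | ∀ a : Fin b, Ffun (j0 y) (XiS b C y u) a = w y a} with hDy
      by_cases hj : j0 y = 0
      · by_cases hw : ∀ a : Fin b, w y a = 0
        · have hDyu : Dy = univ := by
            rw [hDy]
            ext u
            simp only [mem_setOf_eq, mem_univ, iff_true, hj]
            intro a
            rw [Ffun_zero, hw a]
          rw [hDyu, univ_inter, ih t Nsp esp hdisj' j0 w, Finset.prod_insert hy]
          have : childLaw b C (j0 y) (w y) = 1 := by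
            rw [childLaw, if_pos hj, if_pos hw]
          rw [this, one_mul]
        · have hDye : Dy = ∅ := by
            rw [hDy]
            ext u
            simp only [mem_setOf_eq, mem_empty_iff_false, iff_false, not_forall, hj]
            push_neg at hw
            obtain ⟨a, ha⟩ := hw
            exact ⟨a, by rw [Ffun_zero]; omega⟩
          rw [hDye, empty_inter, inter_empty, measure_empty]
          have : childLaw b C (j0 y) (w y) = 0 := by
            rw [childLaw, if_pos hj, if_neg hw]
          rw [Finset.prod_insert hy, this, zero_mul, mul_zero, ENNReal.ofReal_zero]
      · -- main case
        set L := j0 y + ∑ i, w y i with hL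
        set Cyl := fun e : Fin L → Fin (b + 1) =>
          {u : ℝ | ∀ k < L, Xi b C y k u = eExt b e k} with hCyl
        set Nbad := {u : ℝ | ¬ ∃ N, stopAt (j0 y) (XiS b C y u) N} with hNbad
        have hNull : Pvol Nbad = 0 := by
          have hsub : Nbad ⊆ ⋃ m : ℕ, {u : ℝ | ∀ k, m ≤ k → (Xi b C y k u).1 ≠ 0} := by
            intro u hu
            rw [hNbad, mem_setOf_eq] at hu
            have : ¬ InfZeros (XiS b C y u) := by
              intro hinf
              exact hu (exists_stop hinf (by omega))
            rw [InfZeros] at this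
            push_neg at this
            obtain ⟨m, hm⟩ := this
            simp only [mem_iUnion, mem_setOf_eq]
            exact ⟨m, fun k hk => hm k hk⟩
          exact measure_mono_null hsub (measure_iUnion_null (fun m => P_tail_null b C hb y m))
        have hBsubD : (⋃ e ∈ validSet b (j0 y) (w y), Cyl e) ⊆ Dy := by
          intro u hu
          simp only [mem_iUnion] at hu
          obtain ⟨e, he, hue⟩ := hu
          rw [hDy, mem_setOf_eq]
          intro a
          apply Ffun_of_validPrefix b hj he (s := XiS b C y u) ?_ a
          intro k hk
          have h1 := hue k hk
          show Xi b C y k u = e ⟨k, hk⟩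
          rw [h1]
          simp only [eExt]
          rw [dif_pos hk]
        have hDsubB : Dy ⊆ (⋃ e ∈ validSet b (j0 y) (w y), Cyl e) ∪ Nbad := by
          intro u hu
          by_cases hex : ∃ N, stopAt (j0 y) (XiS b C y u) N
          · left
            obtain ⟨N, hN⟩ := hex
            rw [hDy, mem_setOf_eq] at hu
            obtain ⟨hNeq, hval⟩ := validPrefix_of_Ffun b hj hN hu
            simp only [mem_iUnion]
            refine ⟨_, hval, ?_⟩
            intro k hk
            show Xi b C y k u = eExt b (fun k : Fin (j0 y + ∑ i, w y i) => XiS b C y u k.1) k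
            simp only [eExt]
            rw [dif_pos hk]
            rfl
          · right
            rw [hNbad]
            exact hex
        -- replace Dy by the union
        have hPeq : Pvol (T ∩ (Dy ∩ R))
            = Pvol (T ∩ ((⋃ e ∈ validSet b (j0 y) (w y), Cyl e) ∩ R)) := by
          apply le_antisymm
          · have hsub2 : T ∩ (Dy ∩ R)
                ⊆ (T ∩ ((⋃ e ∈ validSet b (j0 y) (w y), Cyl e) ∩ R)) ∪ Nbad := by
              rintro u ⟨hut, hud, hur⟩
              rcases hDsubB hud with h | h
              · exact Or.inl ⟨hut, h, hur⟩
              · exact Or.inr h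
            calc Pvol (T ∩ (Dy ∩ R))
                ≤ Pvol ((T ∩ ((⋃ e ∈ validSet b (j0 y) (w y), Cyl e) ∩ R)) ∪ Nbad) :=
                  measure_mono hsub2
              _ ≤ Pvol (T ∩ ((⋃ e ∈ validSet b (j0 y) (w y), Cyl e) ∩ R)) + Pvol Nbad :=
                  measure_union_le _ _
              _ = Pvol (T ∩ ((⋃ e ∈ validSet b (j0 y) (w y), Cyl e) ∩ R)) := by
                  rw [hNull, add_zero]
          · apply measure_mono
            exact inter_subset_inter_right T (inter_subset_inter_left R hBsubD)
        rw [hPeq]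
        -- distribute the union
        have hdistr : T ∩ ((⋃ e ∈ validSet b (j0 y) (w y), Cyl e) ∩ R)
            = ⋃ e ∈ validSet b (j0 y) (w y), (T ∩ Cyl e) ∩ R := by
          ext u
          simp only [mem_inter_iff, mem_iUnion]
          constructor
          · rintro ⟨h1, ⟨e, he, h2⟩, h3⟩
            exact ⟨e, he, ⟨h1, h2⟩, h3⟩
          · rintro ⟨e, he, ⟨h1, h2⟩, h3⟩
            exact ⟨h1, ⟨e, he, h2⟩, h3⟩
        rw [hdistr]
        -- measure of the disjoint union
        have hdisjU : (↑(validSet b (j0 y) (w y)) : Set (Fin L → Fin (b+1))).PairwiseDisjoint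
            (fun e => (T ∩ Cyl e) ∩ R) := by
          intro e1 h1 e2 h2 hne
          simp only [Function.onFun]
          rw [Set.disjoint_left]
          rintro u ⟨⟨_, hc1⟩, _⟩ ⟨⟨_, hc2⟩, _⟩
          apply hne
          funext k
          have hk1 := hc1 k.1 k.2
          have hk2 := hc2 k.1 k.2
          rw [hk2] at hk1
          unfold eExt at hk1
          rw [dif_pos k.2, dif_pos k.2] at hk1
          exact hk1.symm ▸ (by rw [← hk1])
        have hmeasU : ∀ e ∈ validSet b (j0 y) (w y), MeasurableSet ((T ∩ Cyl e) ∩ R) := by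
          intro e _
          refine MeasurableSet.inter (MeasurableSet.inter ?_ ?_) ?_
          · rw [hT]
            exact MeasurableSet.biInter t.countable_toSet
              (fun x _ => measurableSet_cylEvent b C hb x (Nsp x) (esp x))
          · exact measurableSet_cylEvent b C hb y L (eExt b e)
          · rw [hR]
            exact MeasurableSet.biInter s.countable_toSet
              (fun x _ => measurableSet_Dev b C hb x (j0 x) (w x))
        rw [measure_biUnion_finset hdisjU hmeasU]
        -- evaluate each term by the induction hypothesis
        have hterm : ∀ e ∈ validSet b (j0 y) (w y),
            Pvol ((T ∩ Cyl e) ∩ R) = ENNReal.ofReal (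
              (seqWeight b C e * ∏ x ∈ t, ∏ k ∈ Finset.range (Nsp x), xiProb b C (k + 1) (esp x k).1)
              * ∏ x ∈ s, childLaw b C (j0 x) (w x)) := by
          intro e _
          have hTC : T ∩ Cyl e = ⋂ x ∈ insert y t,
              {u : ℝ | ∀ k < Function.update Nsp y L x,
                Xi b C x k u = Function.update esp y (eExt b e) x k} := by
            rw [Finset.set_biInter_insert, Function.update_self, Function.update_self]
            rw [inter_comm]
            congr 1
            rw [hT]
            apply iInter₂_congr
            intro x hx
            have hxy : x ≠ y := fun h => hyt (h ▸ hx)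
            rw [Function.update_of_ne hxy, Function.update_of_ne hxy]
          rw [hTC, ih (insert y t) _ _
            (Finset.disjoint_insert_left.2 ⟨hy, hdisj'⟩) j0 w]
          congr 2
          rw [Finset.prod_insert hyt, Function.update_self, Function.update_self,
            cylweight_eq_seqWeight b C hb e]
          congr 1
          apply Finset.prod_congr rfl
          intro x hx
          have hxy : x ≠ y := fun h => hyt (h ▸ hx)
          rw [Function.update_of_ne hxy, Function.update_of_ne hxy]
        rw [Finset.sum_congr rfl hterm]
        rw [← ENNReal.ofReal_sum_of_nonneg]
        · congr 1
          rw [← Finset.sum_mul, ← Finset.sum_mul, ← childLaw_eq_sum b C hj (w y)]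
          rw [Finset.prod_insert hy]
          ring
        · intro e _
          apply mul_nonneg (mul_nonneg (seqWeight_nonneg b C hb e) ?_) ?_
          · exact Finset.prod_nonneg fun x _ => Finset.prod_nonneg
              fun k _ => xiProb_nonneg b C hb (by omega) _
          · exact Finset.prod_nonneg fun x _ => childLaw_nonneg b C hb (j0 x) (w x)

/-- the branching Markov chain as a deterministic function of the cookies. -/
noncomputable def field (init : ℕ) (u : ℝ) : Vertex b → ℕ
  | [] => init
  | a :: x => Ffun (field init u x) (XiS b C x u) a

include hb in
lemma measurable_field (init : ℕ) (x : Vertex b) :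
    Measurable (fun u => field b C init u x) := by
  induction x with
  | nil => exact measurable_const
  | cons a x ihx =>
      apply measurable_to_countable'
      intro m
      have hset : (fun u => field b C init u (a :: x)) ⁻¹' {m}
          = ⋃ j0 : ℕ, ((fun u => field b C init u x) ⁻¹' {j0}) ∩
              ((fun u => XiS b C x u) ⁻¹' {s | Ffun j0 s a = m}) := by
        ext u
        simp only [mem_preimage, mem_singleton_iff, mem_iUnion, mem_inter_iff, mem_setOf_eq]
        constructor
        · intro h
          exact ⟨field b C init u x, rfl, h⟩
        · rintro ⟨j0, h1, h2⟩
          show Ffun (field b C init u x) (XiS b C x u) a = m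
          rw [h1]
          exact h2
      rw [hset]
      exact MeasurableSet.iUnion fun j0 =>
        (ihx (measurableSet_singleton j0)).inter
          ((measurable_XiS b C hb x) (measurableSet_FfunFiber b j0 a m))

/-- vertices of a given generation, as a finite set. -/
def vertsOf (n : ℕ) : Finset (Vertex b) :=
  (Finset.univ : Finset (Fin n → Fin b)).image List.ofFn

lemma mem_vertsOf {n : ℕ} {x : Vertex b} : x ∈ vertsOf b n ↔ x.length = n := by
  rw [vertsOf, Finset.mem_image]
  constructor
  · rintro ⟨v, _, rfl⟩
    exact List.length_ofFn
  · intro h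
    subst h
    exact ⟨x.get, Finset.mem_univ _, List.ofFn_get x⟩

/-- vertices of generation `< n`. -/
def vertsLt (n : ℕ) : Finset (Vertex b) :=
  (Finset.range n).biUnion (fun m => vertsOf b m)

lemma mem_vertsLt {n : ℕ} {x : Vertex b} : x ∈ vertsLt b n ↔ x.length < n := by
  rw [vertsLt, Finset.mem_biUnion]
  constructor
  · rintro ⟨m, hm, hx⟩
    rw [mem_vertsOf b] at hx
    rw [hx]
    exact Finset.mem_range.1 hm
  · intro h
    exact ⟨x.length, Finset.mem_range.2 h, (mem_vertsOf b).2 rfl⟩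

/-- characterization of the history event. -/
lemma history_eq (init n : ℕ) (g : Vertex b → ℕ) (hg : g [] = init) :
    {u : ℝ | ∀ y : Vertex b, y.length ≤ n → field b C init u y = g y}
      = ⋂ x ∈ vertsLt b n, {u : ℝ | ∀ a : Fin b, Ffun (g x) (XiS b C x u) a = g (a :: x)} := by
  ext u
  simp only [mem_setOf_eq, mem_iInter]
  constructor
  · intro h x hx a
    rw [mem_vertsLt b] at hx
    have h1 : field b C init u x = g x := h x (by omega)
    have h2 : field b C init u (a :: x) = g (a :: x) := h (a :: x) (by simp; omega)
    rw [← h1, ← h2]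
    rfl
  · intro h y
    induction y with
    | nil => intro _; exact hg.symm
    | cons a x ihx =>
        intro hlen
        have hxg : field b C init u x = g x := ihx (by simp at hlen; omega)
        have hx : x ∈ vertsLt b n := (mem_vertsLt b).2 (by simp at hlen; omega)
        show Ffun (field b C init u x) (XiS b C x u) a = g (a :: x)
        rw [hxg]
        exact h x hx a

include hb in
/-- probability of a history event. -/
lemma P_history (init n : ℕ) (g : Vertex b → ℕ) (hg : g [] = init) :
    Pvol {u : ℝ | ∀ y : Vertex b, y.length ≤ n → field b C init u y = g y}
      = ENNReal.ofReal (∏ x ∈ vertsLt b n, childLaw b C (g x) (fun a => g (a :: x))) := by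
  rw [history_eq b C init n g hg]
  have hw := workhorse b C hb (vertsLt b n) ∅ (fun _ => 0) (fun _ _ => 0)
    (Finset.disjoint_empty_left _) g (fun x a => g (a :: x))
  have hemp : (⋂ x ∈ (∅ : Finset (Vertex b)), {u : ℝ | ∀ k < (0:ℕ), Xi b C x k u = 0}) = univ := by
    simp
  rw [hemp, univ_inter, Finset.prod_empty, one_mul] at hw
  exact hw

lemma vertsLt_succ (n : ℕ) : vertsLt b (n + 1) = vertsLt b n ∪ vertsOf b n := by
  ext x
  rw [Finset.mem_union, mem_vertsLt b, mem_vertsLt b, mem_vertsOf b]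
  omega

lemma vertsLt_disj (n : ℕ) : Disjoint (vertsLt b n) (vertsOf b n) := by
  rw [Finset.disjoint_left]
  intro x h1 h2
  rw [mem_vertsLt b] at h1
  rw [mem_vertsOf b] at h2
  omega

include hb in
lemma measurableSet_history (init n : ℕ) (g : Vertex b → ℕ) :
    MeasurableSet {u : ℝ | ∀ y : Vertex b, y.length ≤ n → field b C init u y = g y} := by
  have : {u : ℝ | ∀ y : Vertex b, y.length ≤ n → field b C init u y = g y}
      = ⋂ y ∈ vertsLt b (n + 1), (fun u => field b C init u y) ⁻¹' {g y} := by
    ext u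
    simp only [mem_iInter, mem_preimage, mem_singleton_iff, mem_setOf_eq]
    constructor
    · intro h y hy
      exact h y (by rw [mem_vertsLt b] at hy; omega)
    · intro h y hy
      exact h y ((mem_vertsLt b).2 (by omega))
  rw [this]
  exact MeasurableSet.biInter (vertsLt b (n+1)).countable_toSet
    (fun y _ => (measurable_field b C hb init y) (measurableSet_singleton _))

include hb in
lemma isBMC_field (init : ℕ) :
    IsBMC b C (Pvol) (fun x u => field b C init u x) init := by
  refine ⟨?_, ?_, ?_⟩
  · intro x m
    exact (measurable_field b C hb init x) (measurableSet_singleton m)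
  · have : {u : ℝ | field b C init u (root b) = init} = univ := by
      ext u
      simp only [mem_setOf_eq, mem_univ, iff_true]
      rfl
    show Pvol {u : ℝ | field b C init u (root b) = init} = 1
    rw [this]
    exact measure_univ
  · intro n g f hPA
    show (Pvol[|{u : ℝ | ∀ y : Vertex b, y.length ≤ n → field b C init u y = g y}])
        {u : ℝ | ∀ x : Vertex b, x.length = n + 1 → field b C init u x = f x} = _
    have hPA' : Pvol {u : ℝ | ∀ y : Vertex b, y.length ≤ n → field b C init u y = g y} ≠ 0 := hPA
    have hg : g [] = init := by
      by_contra hne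
      apply hPA'
      have hempty : {u : ℝ | ∀ y : Vertex b, y.length ≤ n → field b C init u y = g y} = ∅ := by
        ext u
        simp only [mem_setOf_eq, mem_empty_iff_false, iff_false]
        intro hcon
        exact hne ((hcon [] (by simp)).symm)
      rw [hempty]
      exact measure_empty
    set A := {u : ℝ | ∀ y : Vertex b, y.length ≤ n → field b C init u y = g y} with hA
    set B := {u : ℝ | ∀ x : Vertex b, x.length = n + 1 → field b C init u x = f x} with hB
    set h : Vertex b → ℕ := fun y => if y.length ≤ n then g y else f y with hh
    have hgh : h [] = init := by
      rw [hh]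
      simp only [List.length_nil, Nat.zero_le, if_pos]
      exact hg
    have hAB : A ∩ B = {u : ℝ | ∀ y : Vertex b, y.length ≤ n + 1 → field b C init u y = h y} := by
      ext u
      simp only [hA, hB, hh, mem_inter_iff, mem_setOf_eq]
      constructor
      · rintro ⟨h1, h2⟩ y hy
        by_cases hyn : y.length ≤ n
        · rw [if_pos hyn]; exact h1 y hyn
        · rw [if_neg hyn]; exact h2 y (by omega)
      · intro h1
        constructor
        · intro y hy
          have := h1 y (by omega)
          rwa [if_pos hy] at this
        · intro y hy
          have := h1 y (by omega)
          rwa [if_neg (by omega)] at this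
    have hPB : Pvol (A ∩ B) = ENNReal.ofReal
        ((∏ x ∈ vertsLt b n, childLaw b C (g x) (fun a => g (a :: x)))
          * ∏ x ∈ vertsOf b n, childLaw b C (g x) (fun a => f (a :: x))) := by
      rw [hAB, P_history b C hb init (n+1) h hgh, vertsLt_succ b n,
        Finset.prod_union (vertsLt_disj b n)]
      have e1 : ∏ x ∈ vertsLt b n, childLaw b C (h x) (fun a => h (a :: x))
          = ∏ x ∈ vertsLt b n, childLaw b C (g x) (fun a => g (a :: x)) := by
        apply Finset.prod_congr rfl
        intro x hx
        rw [mem_vertsLt b] at hx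
        have hx1 : h x = g x := by rw [hh]; simp only []; rw [if_pos (by omega)]
        have hx2 : ∀ a : Fin b, h (a :: x) = g (a :: x) := by
          intro a
          rw [hh]; simp only []
          rw [if_pos (by simp; omega)]
        rw [hx1]
        congr 1
        funext a
        exact hx2 a
      have e2 : ∏ x ∈ vertsOf b n, childLaw b C (h x) (fun a => h (a :: x))
          = ∏ x ∈ vertsOf b n, childLaw b C (g x) (fun a => f (a :: x)) := by
        apply Finset.prod_congr rfl
        intro x hx
        rw [mem_vertsOf b] at hx
        have hx1 : h x = g x := by rw [hh]; simp only []; rw [if_pos (by omega)]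
        have hx2 : ∀ a : Fin b, h (a :: x) = f (a :: x) := by
          intro a
          rw [hh]; simp only []
          rw [if_neg (by simp; omega)]
        rw [hx1]
        congr 1
        funext a
        exact hx2 a
      rw [e1, e2]
    have hPAv : Pvol A = ENNReal.ofReal
        (∏ x ∈ vertsLt b n, childLaw b C (g x) (fun a => g (a :: x))) :=
      P_history b C hb init n g hg
    have hπ1 : (0:ℝ) ≤ ∏ x ∈ vertsLt b n, childLaw b C (g x) (fun a => g (a :: x)) :=
      Finset.prod_nonneg fun x _ => childLaw_nonneg b C hb _ _
    have hπ2 : (0:ℝ) ≤ ∏ x ∈ vertsOf b n, childLaw b C (g x) (fun a => f (a :: x)) :=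
      Finset.prod_nonneg fun x _ => childLaw_nonneg b C hb _ _
    rw [ProbabilityTheory.cond_apply (measurableSet_history b C hb init n g) Pvol B]
    rw [hPB, hPAv, ENNReal.ofReal_mul hπ1, ← mul_assoc,
      ENNReal.inv_mul_cancel (by rw [← hPAv]; exact hPA') ENNReal.ofReal_ne_top, one_mul]
    congr 1
    rw [vertsOf, Finset.prod_image (fun v1 _ v2 _ hv => List.ofFn_injective hv)]

end Cookie

/-- **Proposition 3.6** (monotonicity of `L` with respect to the initial position).
For `i ≤ j`, the branching Markov chain under `P_i` is stochastically dominated by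
the branching Markov chain under `P_j` : the two processes can be realized on a
common probability space so that `ℓ(x) ≤ ℓ̃(x)` for every vertex `x`, a.s. -/
theorem bmc_monotone_initial_position
    (b : ℕ) (hb : 2 ≤ b) (C : Env) (i j : ℕ) (hij : i ≤ j) :
    ∃ (Ω : Type) (_ : MeasurableSpace Ω) (P : Measure Ω)
      (_ : IsProbabilityMeasure P) (ℓ ℓ' : Vertex b → Ω → ℕ),
      IsBMC b C P ℓ i ∧ IsBMC b C P ℓ' j ∧
        P {ω | ∀ x : Vertex b, ℓ x ω ≤ ℓ' x ω} = 1 := by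
  have hb1 : 1 ≤ b := by omega
  refine ⟨ℝ, inferInstance, Pvol, inferInstance,
    fun x u => field b C i u x, fun x u => field b C j u x,
    isBMC_field b C hb1 i, isBMC_field b C hb1 j, ?_⟩
  have hsub : GoodU b C ⊆ {u : ℝ | ∀ x : Vertex b, field b C i u x ≤ field b C j u x} := by
    intro u hu
    intro x
    induction x with
    | nil => exact hij
    | cons a x ihx =>
        show Ffun (field b C i u x) (XiS b C x u) a ≤ Ffun (field b C j u x) (XiS b C x u) a
        exact Ffun_mono (hu x) ihx a
  show Pvol {u : ℝ | ∀ x : Vertex b, field b C i u x ≤ field b C j u x} = 1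
  set S := {u : ℝ | ∀ x : Vertex b, field b C i u x ≤ field b C j u x} with hS
  have h1 : Pvol Sᶜ = 0 :=
    measure_mono_null (compl_subset_compl.2 hsub) (P_goodU_compl b C hb1)
  have h2 : (1 : ℝ≥0∞) ≤ Pvol S := by
    have := measure_union_le (μ := Pvol) S Sᶜ
    rw [union_compl_self, measure_univ, h1, add_zero] at this
    exact this
  exact le_antisymm prob_le_one h2
end CookieRW
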